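/- Let (X, ∘, \_∘, •, /_•) be an ℕ^p-graded involutive birack satisfying condition lri with associated ℕ^p-graded quadratic algebra A = k⟨X⟩/(xy − (x∘y)(x•y)), and let φ = {φ_s} be commuting graded birack automorphisms with L_{φ_s(x)} = L_x, inducing graded algebra automorphisms of A. Then the algebra A* of the φ-isotope birack (X, *, \_*, ⋄, /_⋄), defined by relations xy = (x*y)(x⋄y), is isomorphic as an ℕ^p-graded algebra to the Zhang twist A^φ of A. -/

import Mathlib

/-- The Yang–Baxter relation of a birack `(X, ∘, •)`: `xy = (x∘y)(x•y)`. -/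
def ybRel (k : Type*) [Field k] {X : Type*} (op bl : X → X → X) :
    FreeAlgebra k X → FreeAlgebra k X → Prop :=
  fun a b => ∃ x y : X,
    a = FreeAlgebra.ι k x * FreeAlgebra.ι k y ∧
    b = FreeAlgebra.ι k (op x y) * FreeAlgebra.ι k (bl x y)

/-- The Yang–Baxter algebra `A(X, R) = k⟨X⟩/(xy − (x∘y)(x•y))` of a birack. -/
def ybAlgebra (k : Type*) [Field k] {X : Type*} (op bl : X → X → X) :=
  RingQuot (ybRel k op bl)

noncomputable instance {k : Type*} [Field k] {X : Type*} (op bl : X → X → X) :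
    Ring (ybAlgebra k op bl) := by unfold ybAlgebra; infer_instance

noncomputable instance {k : Type*} [Field k] {X : Type*} (op bl : X → X → X) :
    Algebra k (ybAlgebra k op bl) := by unfold ybAlgebra; infer_instance

/-- The canonical generator `x ∈ X` inside the Yang–Baxter algebra. -/
noncomputable def ybGen (k : Type*) [Field k] {X : Type*} (op bl : X → X → X) (x : X) :
    ybAlgebra k op bl :=
  RingQuot.mkAlgHom k (ybRel k op bl) (FreeAlgebra.ι k x)

/-- The Yang–Baxter algebra `A*` of the φ-isotope of an ℕ^p-graded involutive birack
satisfying condition lri is isomorphic, as an ℕ^p-graded algebra, to the Zhang twist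
`A^φ` of the Yang–Baxter algebra `A` of the original birack: there is a `k`-linear
equivalence `T : A* → A` which is the identity on the generators `X` (hence degree
preserving, since both algebras are graded by the generators) and transforms the
multiplication of `A*` into the Zhang-twisted multiplication `a ⋆ b = a · Φ^{|a|}(b)`. -/

theorem ybGen_mul_rel (k : Type*) [Field k] {X : Type*} (op bl : X → X → X) (x y : X) :
    ybGen k op bl x * ybGen k op bl y = ybGen k op bl (op x y) * ybGen k op bl (bl x y) := by
  have h := RingQuot.mkAlgHom_rel k (s := ybRel k op bl) ⟨x, y, rfl, rfl⟩
  rw [map_mul, map_mul] at h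
  exact h

noncomputable def ybLift (k : Type*) [Field k] {X : Type*} (op bl : X → X → X) {C : Type*}
    [Semiring C] [Algebra k C] (f : X → C)
    (hf : ∀ x y, f x * f y = f (op x y) * f (bl x y)) :
    ybAlgebra k op bl →ₐ[k] C :=
  RingQuot.liftAlgHom k ⟨FreeAlgebra.lift k f, by
    rintro a b ⟨x, y, rfl, rfl⟩
    simp only [map_mul, FreeAlgebra.lift_ι_apply]
    exact hf x y⟩

theorem ybLift_gen (k : Type*) [Field k] {X : Type*} (op bl : X → X → X) {C : Type*}
    [Semiring C] [Algebra k C] (f : X → C)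
    (hf : ∀ x y, f x * f y = f (op x y) * f (bl x y)) (x : X) :
    ybLift k op bl f hf (ybGen k op bl x) = f x := by
  show RingQuot.liftAlgHom k _ (RingQuot.mkAlgHom k (ybRel k op bl) (FreeAlgebra.ι k x)) = f x
  rw [RingQuot.liftAlgHom_mkAlgHom_apply, FreeAlgebra.lift_ι_apply]

theorem yb_algHom_ext {k : Type*} [Field k] {X : Type*} {op bl : X → X → X} {C : Type*}
    [Semiring C] [Algebra k C] {f g : ybAlgebra k op bl →ₐ[k] C}
    (h : ∀ x, f (ybGen k op bl x) = g (ybGen k op bl x)) : f = g := by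
  have h2 : f.comp (RingQuot.mkAlgHom k (ybRel k op bl))
      = g.comp (RingQuot.mkAlgHom k (ybRel k op bl)) := by
    apply FreeAlgebra.hom_ext
    funext x
    exact h x
  apply AlgHom.ext
  intro a
  obtain ⟨u, rfl⟩ := RingQuot.mkAlgHom_surjective k (ybRel k op bl) a
  exact AlgHom.congr_fun h2 u

theorem yb_induction {k : Type*} [Field k] {X : Type*} {op bl : X → X → X}
    (P : ybAlgebra k op bl → Prop)
    (h0 : ∀ r : k, P (algebraMap k _ r)) (h1 : ∀ x, P (ybGen k op bl x))
    (hmul : ∀ a b, P a → P b → P (a * b)) (hadd : ∀ a b, P a → P b → P (a + b))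
    (a : ybAlgebra k op bl) : P a := by
  obtain ⟨u, rfl⟩ := RingQuot.mkAlgHom_surjective k (ybRel k op bl) a
  induction u using FreeAlgebra.induction with
  | grade0 r => rw [AlgHom.commutes]; exact h0 r
  | grade1 x => exact h1 x
  | mul a b ha hb => rw [map_mul]; exact hmul _ _ ha hb
  | add a b ha hb => rw [map_add]; exact hadd _ _ ha hb

theorem isotope_algebra_iso_zhang_twist
    (k : Type*) [Field k] {X : Type*} {p : ℕ} [Fintype X]
    (op bs bl rd : X → X → X) (deg : X → Fin p)
    (hl1 : ∀ x y, op x (bs x y) = y) (hl2 : ∀ x y, bs x (op x y) = y)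
    (hr1 : ∀ x y, bl (rd y x) x = y) (hr2 : ∀ x y, rd (bl y x) x = y)
    (hb1 : ∀ x y z, op x (op y z) = op (op x y) (op (bl x y) z))
    (hb2 : ∀ x y z, bl (op x y) (op (bl x y) z) = op (bl x (op y z)) (bl y z))
    (hb3 : ∀ x y z, bl (bl x y) z = bl (bl x (op y z)) (bl y z))
    (hi1 : ∀ x y, op (op x y) (bl x y) = x)
    (hi2 : ∀ x y, bl (op x y) (bl x y) = y)
    (hgr1 : ∀ x y, deg (op x y) = deg y) (hgr2 : ∀ x y, deg (bl y x) = deg y)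
    (hlri1 : ∀ x y, bl (op x y) x = y) (hlri2 : ∀ x y, op x (bl y x) = y)
    (φ : Fin p → X ≃ X)
    (haut : ∀ s x y, φ s (op x y) = op (φ s x) (φ s y))
    (hdegpres : ∀ s x, deg (φ s x) = deg x)
    (hcomm : ∀ s t x, φ s (φ t x) = φ t (φ s x))
    (hL : ∀ s x a, op (φ s x) a = op x a)
    -- the graded algebra automorphisms Φ_s of A induced by the φ_s
    (Φ : Fin p → (ybAlgebra k op bl ≃ₐ[k] ybAlgebra k op bl))
    (hΦ : ∀ s x, Φ s (ybGen k op bl x) = ybGen k op bl (φ s x))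
    (hΦcomm : ∀ s t a, Φ s (Φ t a) = Φ t (Φ s a)) :
    -- the isotope operations
    letI star : X → X → X := fun x y => op x (φ (deg x) y)
    letI bsStar : X → X → X := fun x y => (φ (deg x)).symm (bs x y)
    letI diamond : X → X → X := fun x y => bsStar (star x y) x
    -- A* ≅ A^φ as ℕ^p-graded algebras
    ∃ T : ybAlgebra k star diamond ≃ₗ[k] ybAlgebra k op bl,
      T 1 = 1 ∧
      (∀ x : X, T (ybGen k star diamond x) = ybGen k op bl x) ∧
      (∀ (x : X) (b : ybAlgebra k star diamond),
        T (ybGen k star diamond x * b) = ybGen k op bl x * Φ (deg x) (T b)) := by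
  let star : X → X → X := fun x y => op x (φ (deg x) y)
  let diamond : X → X → X := fun x y => (φ (deg (star x y))).symm (bs (star x y) x)
  show ∃ T : ybAlgebra k star diamond ≃ₗ[k] ybAlgebra k op bl,
      T 1 = 1 ∧
      (∀ x : X, T (ybGen k star diamond x) = ybGen k op bl x) ∧
      (∀ (x : X) (b : ybAlgebra k star diamond),
        T (ybGen k star diamond x * b) = ybGen k op bl x * Φ (deg x) (T b))
  have hstar : ∀ x y, star x y = op x (φ (deg x) y) := fun _ _ => rfl
  have hdia : ∀ x y, diamond x y = (φ (deg (star x y))).symm (bs (star x y) x) := fun _ _ => rfl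
  -- basic consequences of the birack axioms
  have hψdeg : ∀ s y, deg ((φ s).symm y) = deg y := by
    intro s y
    have h := hdegpres s ((φ s).symm y)
    rw [(φ s).apply_symm_apply] at h
    exact h.symm
  have hbsφ : ∀ s x y, bs (φ s x) (φ s y) = φ s (bs x y) := by
    intro s x y
    have h := hl2 (φ s x) (φ s (bs x y))
    rwa [← haut, hl1] at h
  have hbsψ : ∀ s x y, bs ((φ s).symm x) ((φ s).symm y) = (φ s).symm (bs x y) := by
    intro s x y
    apply (φ s).injective
    rw [← hbsφ]
    simp only [Equiv.apply_symm_apply]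
  have hautψ : ∀ s x y, op ((φ s).symm x) ((φ s).symm y) = (φ s).symm (op x y) := by
    intro s x y
    apply (φ s).injective
    rw [haut]
    simp only [Equiv.apply_symm_apply]
  have hcommψψ : ∀ s t x, (φ s).symm ((φ t).symm x) = (φ t).symm ((φ s).symm x) := by
    intro s t x
    apply (φ t).injective
    apply (φ s).injective
    conv_lhs => rw [hcomm]
    simp only [Equiv.apply_symm_apply]
  have hcommψφ : ∀ s t x, (φ s).symm (φ t x) = φ t ((φ s).symm x) := by
    intro s t x
    apply (φ s).injective
    rw [Equiv.apply_symm_apply, hcomm]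
    simp only [Equiv.apply_symm_apply]
  have hbs_bl : ∀ x y, bs (op x y) x = bl x y := by
    intro x y
    have h := hl2 (op x y) (bl x y)
    rwa [hi1] at h
  have hdstar : ∀ x y, deg (star x y) = deg y := by
    intro x y
    rw [hstar, hgr1, hdegpres]
  have hbsstar : ∀ x y, bs (star x y) x = bl x (φ (deg x) y) := by
    intro x y
    rw [hstar]
    exact hbs_bl x (φ (deg x) y)
  have hddia : ∀ x y, deg (diamond x y) = deg x := by
    intro x y
    rw [hdia, hψdeg, hbsstar, hgr2]
  have hφdia : ∀ x y, φ (deg y) (diamond x y) = bl x (φ (deg x) y) := by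
    intro x y
    rw [hdia, hdstar, Equiv.apply_symm_apply, hbsstar]
  -- equivariance of the isotope operations
  have hstarφ : ∀ s x y, star (φ s x) (φ s y) = φ s (star x y) := by
    intro s x y
    rw [hstar, hstar, hdegpres, ← hcomm, ← haut]
  have hstarψ : ∀ s x y, star ((φ s).symm x) ((φ s).symm y) = (φ s).symm (star x y) := by
    intro s x y
    apply (φ s).injective
    rw [← hstarφ]
    simp only [Equiv.apply_symm_apply]
  have hdiaφ : ∀ s x y, diamond (φ s x) (φ s y) = φ s (diamond x y) := by
    intro s x y
    rw [hdia, hdia, hstarφ, hdegpres, hbsφ, hcommψφ]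
  have hdiaψ : ∀ s x y, diamond ((φ s).symm x) ((φ s).symm y) = (φ s).symm (diamond x y) := by
    intro s x y
    apply (φ s).injective
    rw [← hdiaφ]
    simp only [Equiv.apply_symm_apply]
  -- canonical star/diamond values
  have hstcan : ∀ x y, star x ((φ (deg x)).symm y) = op x y := by
    intro x y
    rw [hstar, Equiv.apply_symm_apply]
  have hdcan : ∀ x y, diamond x ((φ (deg x)).symm y) = (φ (deg y)).symm (bl x y) := by
    intro x y
    rw [hdia, hstcan, hgr1, hbs_bl]
  -- relations in the two algebras
  have hrelA : ∀ a b, ybGen k op bl a * ybGen k op bl b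
      = ybGen k op bl (op a b) * ybGen k op bl (bl a b) := ybGen_mul_rel k op bl
  have hrelB : ∀ a b, ybGen k star diamond a * ybGen k star diamond b
      = ybGen k star diamond (star a b) * ybGen k star diamond (diamond a b) :=
    ybGen_mul_rel k star diamond
  -- the algebra endomorphisms of A* induced by φ s and (φ s)⁻¹
  let ΨB : Fin p → (ybAlgebra k star diamond →ₐ[k] ybAlgebra k star diamond) := fun s =>
    ybLift k star diamond (fun x => ybGen k star diamond (φ s x)) (by
      intro x y
      rw [hrelB, hstarφ, hdiaφ])
  let χB : Fin p → (ybAlgebra k star diamond →ₐ[k] ybAlgebra k star diamond) := fun s =>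
    ybLift k star diamond (fun x => ybGen k star diamond ((φ s).symm x)) (by
      intro x y
      rw [hrelB, hstarψ, hdiaψ])
  have hΨB : ∀ s x, ΨB s (ybGen k star diamond x) = ybGen k star diamond (φ s x) :=
    fun s x => ybLift_gen k star diamond _ _ x
  have hχB : ∀ s x, χB s (ybGen k star diamond x) = ybGen k star diamond ((φ s).symm x) :=
    fun s x => ybLift_gen k star diamond _ _ x
  have hχΨ : ∀ s a, χB s (ΨB s a) = a := by
    intro s a
    have h : (χB s).comp (ΨB s) = AlgHom.id k (ybAlgebra k star diamond) := by
      apply yb_algHom_ext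
      intro x
      rw [AlgHom.comp_apply, hΨB, hχB, Equiv.symm_apply_apply, AlgHom.id_apply]
    exact AlgHom.congr_fun h a
  have hΨχ : ∀ s a, ΨB s (χB s a) = a := by
    intro s a
    have h : (ΨB s).comp (χB s) = AlgHom.id k (ybAlgebra k star diamond) := by
      apply yb_algHom_ext
      intro x
      rw [AlgHom.comp_apply, hχB, hΨB, Equiv.apply_symm_apply, AlgHom.id_apply]
    exact AlgHom.congr_fun h a
  have hχχ : ∀ s t a, χB s (χB t a) = χB t (χB s a) := by
    intro s t a
    have h : (χB s).comp (χB t) = (χB t).comp (χB s) := by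
      apply yb_algHom_ext
      intro x
      rw [AlgHom.comp_apply, AlgHom.comp_apply, hχB, hχB, hχB, hχB, hcommψψ]
    exact AlgHom.congr_fun h a
  have hχΨc : ∀ s t a, χB s (ΨB t a) = ΨB t (χB s a) := by
    intro s t a
    have h : (χB s).comp (ΨB t) = (ΨB t).comp (χB s) := by
      apply yb_algHom_ext
      intro x
      rw [AlgHom.comp_apply, AlgHom.comp_apply, hΨB, hχB, hχB, hΨB, hcommψφ]
    exact AlgHom.congr_fun h a
  -- the representation ρ̂ : A* → End(A)
  let ρhat : ybAlgebra k star diamond →ₐ[k] Module.End k (ybAlgebra k op bl) :=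
    ybLift k star diamond
      (fun x => (@LinearMap.mulLeft k _ _ _ Algebra.toModule _ (ybGen k op bl x)) ∘ₗ (Φ (deg x)).toLinearMap)
      (by
        intro x y
        apply LinearMap.ext
        intro c
        simp only [Module.End.mul_apply, LinearMap.comp_apply, LinearMap.mulLeft_apply,
          AlgEquiv.toLinearMap_apply]
        show ybGen k op bl x * Φ (deg x) (ybGen k op bl y * Φ (deg y) c) = ybGen k op bl (star x y) * Φ (deg (star x y)) (ybGen k op bl (diamond x y) * Φ (deg (diamond x y)) c)
        rw [hdstar, hddia, map_mul, map_mul, hΦ, hΦ, hφdia, hΦcomm, ← mul_assoc, ← mul_assoc,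
          hrelA, ← hstar])
  have hρgen : ∀ x c, ρhat (ybGen k star diamond x) c
      = ybGen k op bl x * Φ (deg x) c := by
    intro x c
    rw [show ρhat (ybGen k star diamond x)
        = (@LinearMap.mulLeft k _ _ _ Algebra.toModule _ (ybGen k op bl x)) ∘ₗ (Φ (deg x)).toLinearMap from
      ybLift_gen k star diamond _ _ x]
    rfl
  -- the representation σ̂ : A → End(A*)
  let σhat : ybAlgebra k op bl →ₐ[k] Module.End k (ybAlgebra k star diamond) :=
    ybLift k op bl
      (fun x => (@LinearMap.mulLeft k _ _ _ Algebra.toModule _ (ybGen k star diamond x)) ∘ₗ (χB (deg x)).toLinearMap)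
      (by
        intro x y
        apply LinearMap.ext
        intro c
        simp only [Module.End.mul_apply, LinearMap.comp_apply, LinearMap.mulLeft_apply,
          AlgHom.toLinearMap_apply]
        show ybGen k star diamond x * χB (deg x) (ybGen k star diamond y * χB (deg y) c) = ybGen k star diamond (op x y) * χB (deg (op x y)) (ybGen k star diamond (bl x y) * χB (deg (bl x y)) c)
        rw [hgr1, hgr2 y x, map_mul, hχB, hχχ, ← mul_assoc, map_mul, hχB, ← mul_assoc,
          hrelB, hstcan, hdcan])
  have hσgen : ∀ x c, σhat (ybGen k op bl x) c
      = ybGen k star diamond x * χB (deg x) c := by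
    intro x c
    rw [show σhat (ybGen k op bl x)
        = (@LinearMap.mulLeft k _ _ _ Algebra.toModule _ (ybGen k star diamond x)) ∘ₗ (χB (deg x)).toLinearMap from
      ybLift_gen k op bl _ _ x]
    rfl
  -- T and S
  let T : ybAlgebra k star diamond →ₗ[k] ybAlgebra k op bl :=
    { toFun := fun a => ρhat a 1
      map_add' := fun a b => by
        show ρhat (a + b) 1 = ρhat a 1 + ρhat b 1
        rw [map_add, LinearMap.add_apply]
      map_smul' := fun r a => by
        show ρhat (r • a) 1 = r • ρhat a 1
        rw [map_smul, LinearMap.smul_apply] }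
  let S : ybAlgebra k op bl →ₗ[k] ybAlgebra k star diamond :=
    { toFun := fun c => σhat c 1
      map_add' := fun a b => by
        show σhat (a + b) 1 = σhat a 1 + σhat b 1
        rw [map_add, LinearMap.add_apply]
      map_smul' := fun r a => by
        show σhat (r • a) 1 = r • σhat a 1
        rw [map_smul, LinearMap.smul_apply] }
  have hTapp : ∀ a, T a = ρhat a 1 := fun _ => rfl
  have hSapp : ∀ c, S c = σhat c 1 := fun _ => rfl
  have hT1 : T 1 = 1 := by
    show ρhat 1 1 = 1
    rw [map_one ρhat]
    rfl
  have hS1 : S 1 = 1 := by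
    show σhat 1 1 = 1
    rw [map_one σhat]
    rfl
  have hTmul : ∀ a b, T (a * b) = ρhat a (T b) := by
    intro a b
    rw [hTapp, hTapp, map_mul, Module.End.mul_apply]
  have hSmul : ∀ a b, S (a * b) = σhat a (S b) := by
    intro a b
    rw [hSapp, hSapp, map_mul, Module.End.mul_apply]
  have hTgen : ∀ x b, T (ybGen k star diamond x * b)
      = ybGen k op bl x * Φ (deg x) (T b) := by
    intro x b
    rw [hTmul, hρgen]
  have hSgen : ∀ x b, S (ybGen k op bl x * b)
      = ybGen k star diamond x * χB (deg x) (S b) := by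
    intro x b
    rw [hSmul, hσgen]
  have hTx : ∀ x, T (ybGen k star diamond x) = ybGen k op bl x := by
    intro x
    have h := hTgen x 1
    rwa [mul_one, hT1, map_one, mul_one] at h
  -- intertwining on the A side
  have hInt1 : ∀ a : ybAlgebra k star diamond, ∀ s c,
      ρhat (ΨB s a) (Φ s c) = Φ s (ρhat a c) := by
    intro a
    induction a using yb_induction with
    | h0 r =>
      intro s c
      rw [AlgHom.commutes, AlgHom.commutes, Module.algebraMap_end_apply,
        Module.algebraMap_end_apply, map_smul]
    | h1 x =>
      intro s c
      rw [hΨB, hρgen, hρgen, hdegpres, map_mul, hΦ, hΦcomm]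
    | hmul a b ha hb =>
      intro s c
      calc ρhat (ΨB s (a * b)) (Φ s c)
          = ρhat (ΨB s a) (ρhat (ΨB s b) (Φ s c)) := by
            rw [map_mul, map_mul, Module.End.mul_apply]
        _ = Φ s (ρhat a (ρhat b c)) := by rw [hb, ha]
        _ = Φ s (ρhat (a * b) c) := by
            rw [← Module.End.mul_apply, ← map_mul]
    | hadd a b ha hb =>
      intro s c
      calc ρhat (ΨB s (a + b)) (Φ s c)
          = ρhat (ΨB s a) (Φ s c) + ρhat (ΨB s b) (Φ s c) := by
            rw [map_add, map_add, LinearMap.add_apply]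
        _ = Φ s (ρhat a c) + Φ s (ρhat b c) := by rw [ha, hb]
        _ = Φ s (ρhat (a + b) c) := by
            rw [← map_add, ← LinearMap.add_apply, ← map_add]
  have hIntT : ∀ s a, T (ΨB s a) = Φ s (T a) := by
    intro s a
    have h := hInt1 a s 1
    rw [map_one (Φ s)] at h
    rw [hTapp, hTapp]
    exact h
  have hIntTχ : ∀ s a, Φ s (T (χB s a)) = T a := by
    intro s a
    conv_rhs => rw [← hΨχ s a]
    rw [hIntT]
  -- intertwining on the A* side
  have hInt2 : ∀ c : ybAlgebra k op bl, ∀ s b,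
      σhat (Φ s c) (ΨB s b) = ΨB s (σhat c b) := by
    intro c
    induction c using yb_induction with
    | h0 r =>
      intro s b
      rw [AlgEquiv.commutes, AlgHom.commutes, Module.algebraMap_end_apply,
        Module.algebraMap_end_apply, map_smul]
    | h1 x =>
      intro s b
      rw [hΦ, hσgen, hσgen, hdegpres, map_mul, hΨB, hχΨc]
    | hmul a b ha hb =>
      intro s c
      calc σhat (Φ s (a * b)) (ΨB s c)
          = σhat (Φ s a) (σhat (Φ s b) (ΨB s c)) := by
            rw [map_mul, map_mul, Module.End.mul_apply]
        _ = ΨB s (σhat a (σhat b c)) := by rw [hb, ha]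
        _ = ΨB s (σhat (a * b) c) := by
            rw [← Module.End.mul_apply, ← map_mul]
    | hadd a b ha hb =>
      intro s c
      calc σhat (Φ s (a + b)) (ΨB s c)
          = σhat (Φ s a) (ΨB s c) + σhat (Φ s b) (ΨB s c) := by
            rw [map_add, map_add, LinearMap.add_apply]
        _ = ΨB s (σhat a c) + ΨB s (σhat b c) := by rw [ha, hb]
        _ = ΨB s (σhat (a + b) c) := by
            rw [← map_add, ← LinearMap.add_apply, ← map_add]
  have hIntS : ∀ s c, S (Φ s c) = ΨB s (S c) := by
    intro s c
    have h := hInt2 c s 1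
    rw [map_one (ΨB s)] at h
    rw [hSapp, hSapp]
    exact h
  -- S ∘ T = id
  have hST : ∀ a : ybAlgebra k star diamond, ∀ c, S (ρhat a c) = a * S c := by
    intro a
    induction a using yb_induction with
    | h0 r =>
      intro c
      rw [AlgHom.commutes, Module.algebraMap_end_apply, map_smul, Algebra.smul_def]
    | h1 x =>
      intro c
      rw [hρgen, hSgen, hIntS, hχΨ]
    | hmul a b ha hb =>
      intro c
      rw [map_mul, Module.End.mul_apply, ha, hb, mul_assoc]
    | hadd a b ha hb =>
      intro c
      rw [map_add, LinearMap.add_apply, map_add, ha, hb, add_mul]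
  have hST' : ∀ a, S (T a) = a := by
    intro a
    rw [hTapp, hST, hS1, mul_one]
  -- T ∘ S = id
  have hTS : ∀ c : ybAlgebra k op bl, ∀ b, T (σhat c b) = c * T b := by
    intro c
    induction c using yb_induction with
    | h0 r =>
      intro b
      rw [AlgHom.commutes, Module.algebraMap_end_apply, map_smul, Algebra.smul_def]
    | h1 x =>
      intro b
      rw [hσgen, hTgen, hIntTχ]
    | hmul a b ha hb =>
      intro b
      rw [map_mul, Module.End.mul_apply, ha, hb, mul_assoc]
    | hadd a b ha hb =>
      intro b
      rw [map_add, LinearMap.add_apply, map_add, ha, hb, add_mul]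
  have hTS' : ∀ c, T (S c) = c := by
    intro c
    rw [hSapp, hTS, hT1, mul_one]
  refine ⟨LinearEquiv.ofLinear T S (LinearMap.ext hTS') (LinearMap.ext hST'), hT1, hTx, hTgen⟩
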